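/- Let F be an n-uniform hypergraph with maximum degree at most 2^n/(4en) and an even number of vertices. Then for every perfect pairing (v_{i_1}, w_{i_1}), (v_{i_2}, w_{i_2}), ... of the vertices of F, there exists a proper 2-coloring of F in which v_{i_k} and w_{i_k} receive different colors for every k. -/

import Mathlib

open Finset

section Helpers

variable {I : Type} [Fintype I] [DecidableEq I]

/-- Independence of events depending on disjoint coordinate sets, counting form. -/
lemma indep_card (T : Finset I) (X Y : Finset (I → Bool))
    (hX : ∀ ω ω' : I → Bool, (∀ i ∈ T, ω i = ω' i) → ω ∈ X → ω' ∈ X)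
    (hY : ∀ ω ω' : I → Bool, (∀ i ∉ T, ω i = ω' i) → ω ∈ Y → ω' ∈ Y) :
    X.card * Y.card = (X ∩ Y).card * Fintype.card (I → Bool) := by
  classical
  have key : (X ×ˢ Y).card = ((X ∩ Y) ×ˢ (univ : Finset (I → Bool))).card := by
    apply Finset.card_nbij'
      (i := fun ωσ => (fun i => if i ∈ T then ωσ.1 i else ωσ.2 i,
        fun i => if i ∈ T then ωσ.2 i else ωσ.1 i))
      (j := fun τρ => (fun i => if i ∈ T then τρ.1 i else τρ.2 i,
        fun i => if i ∈ T then τρ.2 i else τρ.1 i))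
    · rintro ⟨ω, σ⟩ h
      rw [Finset.mem_coe, Finset.mem_product] at h
      rw [Finset.mem_coe, Finset.mem_product]
      refine ⟨Finset.mem_inter.2 ⟨?_, ?_⟩, Finset.mem_univ _⟩
      · exact hX ω _ (fun i hi => by simp [hi]) h.1
      · exact hY σ _ (fun i hi => by simp [hi]) h.2
    · rintro ⟨τ, ρ⟩ h
      rw [Finset.mem_coe, Finset.mem_product, Finset.mem_inter] at h
      rw [Finset.mem_coe, Finset.mem_product]
      constructor
      · exact hX τ _ (fun i hi => by simp [hi]) h.1.1
      · exact hY τ _ (fun i hi => by simp [hi]) h.1.2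
    · rintro ⟨ω, σ⟩ -
      simp only [Prod.mk.injEq]
      constructor <;> (funext i; by_cases hi : i ∈ T <;> simp [hi])
    · rintro ⟨τ, ρ⟩ -
      simp only [Prod.mk.injEq]
      constructor <;> (funext i; by_cases hi : i ∈ T <;> simp [hi])
  simpa [Finset.card_product] using key

/-- If all members of `S` agree on coordinates in `T`, then `S` is small. -/
lemma agree_card (S : Finset (I → Bool)) (T : Finset I)
    (h : ∀ ω ∈ S, ∀ ω' ∈ S, ∀ i ∈ T, ω i = ω' i) :
    S.card ≤ 2 ^ (Fintype.card I - T.card) := by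
  classical
  have : S.card ≤ (univ : Finset ({i : I // i ∉ T} → Bool)).card := by
    apply Finset.card_le_card_of_injOn (fun ω => fun i : {i : I // i ∉ T} => ω i.1)
      (fun a _ => mem_univ _)
    intro ω hω ω' hω' heq
    funext i
    by_cases hi : i ∈ T
    · exact h ω hω ω' hω' i hi
    · exact congrFun heq ⟨i, hi⟩
  calc S.card ≤ _ := this
    _ = 2 ^ (Fintype.card I - T.card) := by
      rw [Finset.card_univ, Fintype.card_fun, Fintype.card_bool]
      congr 1
      rw [Fintype.card_subtype]
      rw [Finset.filter_not, Finset.filter_mem_eq_inter, Finset.univ_inter,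
        Finset.card_sdiff_of_subset (Finset.subset_univ T), Finset.card_univ]

/-- `exp (-1) ≤ (1-x)^k` when `x ≤ 1/(k+1)`. -/
lemma one_sub_pow_ge_exp_neg_one (k : ℕ) (x : ℝ) (hx0 : 0 ≤ x) (hx : x ≤ 1 / (k + 1)) :
    Real.exp (-1) ≤ (1 - x) ^ k := by
  have hk1 : (0:ℝ) < (k:ℝ) + 1 := by positivity
  have h1 : (0:ℝ) ≤ 1 - 1 / ((k:ℝ) + 1) := by
    rw [sub_nonneg]
    rw [div_le_one hk1]
    linarith
  have step1 : (1 - 1 / ((k:ℝ)+1)) ^ k ≤ (1 - x) ^ k := by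
    apply pow_le_pow_left₀ h1
    linarith
  refine le_trans ?_ step1
  rcases Nat.eq_zero_or_pos k with hk | hk
  · subst hk
    simp only [pow_zero]
    rw [Real.exp_neg]
    have h1 : (1:ℝ) ≤ Real.exp 1 := by
      have := Real.add_one_le_exp (1:ℝ)
      linarith
    calc (Real.exp 1)⁻¹ ≤ 1⁻¹ := by
          apply inv_anti₀ one_pos h1
      _ = 1 := inv_one
  · have hkR : (0:ℝ) < (k:ℝ) := by exact_mod_cast hk
    have hne : ((k:ℝ)) ≠ 0 := ne_of_gt hkR
    have key : ((k:ℝ)+1) / k ≤ Real.exp (1 / k) := by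
      have := Real.add_one_le_exp (1 / (k:ℝ))
      have : 1 / (k:ℝ) + 1 ≤ Real.exp (1/k) := this
      calc ((k:ℝ)+1)/k = 1/(k:ℝ) + 1 := by field_simp; ring
        _ ≤ _ := this
    have key2 : (((k:ℝ)+1)/k) ^ k ≤ Real.exp 1 := by
      calc (((k:ℝ)+1)/k) ^ k ≤ (Real.exp (1/k)) ^ k := by
            apply pow_le_pow_left₀ (by positivity) key
        _ = Real.exp ((1/k) * k) := by rw [← Real.exp_nat_mul]; ring_nf
        _ = Real.exp 1 := by rw [one_div, inv_mul_cancel₀ hne]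
    have hpos : (0:ℝ) < (((k:ℝ)+1)/k) ^ k := by positivity
    have heq : (1 - 1 / ((k:ℝ)+1)) ^ k = ((((k:ℝ)+1)/k) ^ k)⁻¹ := by
      rw [← inv_pow]
      congr 1
      field_simp
      ring
    rw [heq, Real.exp_neg]
    exact inv_anti₀ hpos key2

end Helpers

open Finset

section LLLCore

variable {I κ : Type} [Fintype I] [DecidableEq I] [Fintype κ] [DecidableEq κ]

/-- The set of assignments avoiding all events indexed by `S`. -/
def BSet (A : κ → Finset (I → Bool)) (S : Finset κ) : Finset (I → Bool) :=
  univ.filter fun ω => ∀ k ∈ S, ω ∉ A k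

lemma BSet_empty (A : κ → Finset (I → Bool)) : BSet A ∅ = univ := by
  simp [BSet]

lemma BSet_mono (A : κ → Finset (I → Bool)) {S S' : Finset κ} (h : S ⊆ S') :
    BSet A S' ⊆ BSet A S := by
  intro ω hω
  simp only [BSet, mem_filter, mem_univ, true_and] at hω ⊢
  exact fun k hk => hω k (h hk)

lemma card_BSet_insert (A : κ → Finset (I → Bool)) (a : κ) (S : Finset κ) :
    ((BSet A (insert a S)).card : ℝ)
      = (BSet A S).card - ((A a ∩ BSet A S).card : ℝ) := by
  have h1 : BSet A (insert a S) = BSet A S \ (A a ∩ BSet A S) := by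
    ext ω
    simp only [BSet, mem_filter, mem_univ, true_and, mem_sdiff, mem_insert, mem_inter]
    constructor
    · intro h
      exact ⟨fun k hk => h k (Or.inr hk), fun hc => h a (Or.inl rfl) hc.1⟩
    · rintro ⟨h1, h2⟩ k hk
      rcases hk with rfl | hk
      · exact fun hc => h2 ⟨hc, h1⟩
      · exact h1 k hk
  rw [h1, Finset.cast_card_sdiff inter_subset_right]

theorem LLL_claim1 (A : κ → Finset (I → Bool)) (vbl : κ → Finset I)
    (x : ℝ) (hx0 : 0 < x) (hx1 : x < 1)
    (hdep : ∀ k, ∀ ω ω' : I → Bool, (∀ i ∈ vbl k, ω i = ω' i) → ω ∈ A k → ω' ∈ A k)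
    (hcond : ∀ k, ((A k).card : ℝ) ≤ x *
      (1 - x) ^ (((univ.filter fun j => ¬ Disjoint (vbl j) (vbl k)).card) - 1) *
      (Fintype.card (I → Bool))) :
    ∀ m : ℕ, ∀ S : Finset κ, S.card ≤ m → ∀ k, k ∉ S →
      ((A k ∩ BSet A S).card : ℝ) ≤ x * (BSet A S).card := by
  have hΩpos : (0:ℝ) < Fintype.card (I → Bool) := by
    have : 0 < Fintype.card (I → Bool) := Fintype.card_pos
    exact_mod_cast this
  have h1x : (0:ℝ) < 1 - x := by linarith
  -- the bound `card (A k) ≤ x * (1-x)^(S1.card) * |Ω|` whenever `S1.card ≤ N k - 1`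
  have hcond' : ∀ k (c : ℕ),
      c ≤ ((univ.filter fun j => ¬ Disjoint (vbl j) (vbl k)).card) - 1 →
      ((A k).card : ℝ) ≤ x * (1 - x) ^ c * (Fintype.card (I → Bool)) := by
    intro k c hc
    refine le_trans (hcond k) ?_
    have : (1 - x) ^ (((univ.filter fun j => ¬ Disjoint (vbl j) (vbl k)).card) - 1)
        ≤ (1 - x) ^ c := pow_le_pow_of_le_one h1x.le (by linarith) hc
    have h2 : (0:ℝ) ≤ x := hx0.le
    exact mul_le_mul_of_nonneg_right (mul_le_mul_of_nonneg_left this h2) hΩpos.le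
  intro m
  induction m with
  | zero =>
    intro S hS k _
    have hS0 : S = ∅ := Finset.card_eq_zero.1 (Nat.le_zero.1 hS)
    subst hS0
    rw [BSet_empty, Finset.inter_univ, Finset.card_univ]
    calc ((A k).card : ℝ) ≤ x * (1 - x) ^ (0:ℕ) * (Fintype.card (I → Bool)) :=
          hcond' k 0 (Nat.zero_le _)
      _ = x * (Fintype.card (I → Bool)) := by ring
  | succ m ih =>
    intro S hS k hk
    set S1 := S.filter (fun j => ¬ Disjoint (vbl j) (vbl k)) with hS1def
    set S2 := S \ S1 with hS2def
    have hS1sub : S1 ⊆ S := filter_subset _ _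
    have hunion : S2 ∪ S1 = S := Finset.sdiff_union_of_subset hS1sub
    have hcards : S2.card = S.card - S1.card := Finset.card_sdiff_of_subset hS1sub
    have hcards2 : S1.card ≤ S.card := Finset.card_le_card hS1sub
    -- auxiliary chain bound
    have aux : ∀ U : Finset κ, U ⊆ S1 →
        (1 - x) ^ U.card * ((BSet A S2).card : ℝ) ≤ (BSet A (S2 ∪ U)).card := by
      intro U
      induction U using Finset.induction_on with
      | empty => intro _; simp
      | @insert a U' ha ihU =>
        intro hsub
        have haS1 : a ∈ S1 := hsub (mem_insert_self a U')
        have hU'S1 : U' ⊆ S1 := fun u hu => hsub (mem_insert_of_mem hu)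
        have haS2U : a ∉ S2 ∪ U' := by
          intro hmem
          rcases Finset.mem_union.1 hmem with h | h
          · exact (Finset.mem_sdiff.1 h).2 haS1
          · exact ha h
        have hUlt : U'.card + 1 ≤ S1.card := by
          have : U' ⊂ S1 := Finset.ssubset_iff_of_subset hU'S1 |>.2 ⟨a, haS1, ha⟩
          exact Nat.succ_le_of_lt (Finset.card_lt_card this)
        have hcardle : (S2 ∪ U').card ≤ m := by
          have h2 := Finset.card_union_le S2 U'
          omega
        have hstep := ih (S2 ∪ U') hcardle a haS2U
        have hrec := ihU hU'S1
        rw [Finset.union_insert, card_BSet_insert, Finset.card_insert_of_notMem ha]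
        have hb2 : (0:ℝ) ≤ ((BSet A S2).card : ℝ) := by positivity
        calc (1 - x) ^ (U'.card + 1) * ((BSet A S2).card : ℝ)
            = (1 - x) * ((1 - x) ^ U'.card * ((BSet A S2).card : ℝ)) := by ring
          _ ≤ (1 - x) * ((BSet A (S2 ∪ U')).card : ℝ) :=
              mul_le_mul_of_nonneg_left hrec h1x.le
          _ ≤ ((BSet A (S2 ∪ U')).card : ℝ) - ((A a ∩ BSet A (S2 ∪ U')).card : ℝ) := by
              linarith
    -- S1 is small
    have hkS1 : k ∉ S1 := fun h => hk (hS1sub h)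
    have hS1N : S1.card ≤ ((univ.filter fun j => ¬ Disjoint (vbl j) (vbl k)).card) - 1 := by
      set Nk := univ.filter fun j => ¬ Disjoint (vbl j) (vbl k) with hNk
      by_cases hkN : k ∈ Nk
      · have hsub : S1 ⊆ Nk.erase k := by
          intro j hj
          refine Finset.mem_erase.2 ⟨?_, ?_⟩
          · rintro rfl; exact hkS1 hj
          · exact Finset.mem_filter.2 ⟨mem_univ _, (Finset.mem_filter.1 hj).2⟩
        calc S1.card ≤ (Nk.erase k).card := Finset.card_le_card hsub
          _ = Nk.card - 1 := Finset.card_erase_of_mem hkN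
      · have hvblk : vbl k = ∅ := by
          by_contra hne
          exact hkN (Finset.mem_filter.2 ⟨mem_univ _,
            fun hd => hne (Finset.disjoint_self_iff_empty _ |>.1 hd)⟩)
        have : S1 = ∅ := by
          refine Finset.eq_empty_of_forall_notMem fun j hj => ?_
          exact (Finset.mem_filter.1 hj).2 (by rw [hvblk]; exact Finset.disjoint_empty_right _)
        simp [this]
    -- independence
    have hB2dep : ∀ ω ω' : I → Bool, (∀ i ∉ vbl k, ω i = ω' i) →
        ω ∈ BSet A S2 → ω' ∈ BSet A S2 := by
      intro ω ω' hagree hω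
      simp only [BSet, mem_filter, mem_univ, true_and] at hω ⊢
      intro j hj hω'
      have hdisj : Disjoint (vbl j) (vbl k) := by
        have hj2 := (Finset.mem_sdiff.1 hj).2
        have hjS := (Finset.mem_sdiff.1 hj).1
        by_contra hnd
        exact hj2 (Finset.mem_filter.2 ⟨hjS, hnd⟩)
      refine hω j hj (hdep j ω' ω ?_ hω')
      intro i hi
      exact (hagree i (Finset.disjoint_left.1 hdisj hi)).symm
    have hindep : ((A k).card : ℝ) * ((BSet A S2).card : ℝ)
        = ((A k ∩ BSet A S2).card : ℝ) * (Fintype.card (I → Bool)) := by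
      exact_mod_cast congrArg (Nat.cast (R := ℝ))
        (indep_card (vbl k) (A k) (BSet A S2) (hdep k) hB2dep)
    -- put everything together
    have hb2 : (0:ℝ) ≤ ((BSet A S2).card : ℝ) := by positivity
    have hAB2 : ((A k ∩ BSet A S2).card : ℝ)
        ≤ x * (1 - x) ^ S1.card * ((BSet A S2).card : ℝ) := by
      have h3 : ((A k ∩ BSet A S2).card : ℝ) * (Fintype.card (I → Bool))
          ≤ (x * (1 - x) ^ S1.card * ((BSet A S2).card : ℝ)) * (Fintype.card (I → Bool)) := by
        rw [← hindep]
        have := mul_le_mul_of_nonneg_right (hcond' k S1.card hS1N) hb2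
        calc ((A k).card : ℝ) * ((BSet A S2).card : ℝ)
            ≤ (x * (1 - x) ^ S1.card * (Fintype.card (I → Bool))) * ((BSet A S2).card : ℝ) := this
          _ = (x * (1 - x) ^ S1.card * ((BSet A S2).card : ℝ)) * (Fintype.card (I → Bool)) := by
              ring
      exact le_of_mul_le_mul_right h3 hΩpos
    have hchain : (1 - x) ^ S1.card * ((BSet A S2).card : ℝ) ≤ ((BSet A S).card : ℝ) := by
      have := aux S1 (Finset.Subset.refl S1)
      rwa [hunion] at this
    calc ((A k ∩ BSet A S).card : ℝ)
        ≤ ((A k ∩ BSet A S2).card : ℝ) := by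
          exact_mod_cast Finset.card_le_card (Finset.inter_subset_inter (Finset.Subset.refl _)
            (BSet_mono A (Finset.sdiff_subset)))
      _ ≤ x * ((1 - x) ^ S1.card * ((BSet A S2).card : ℝ)) := by
          rw [← mul_assoc]; exact hAB2
      _ ≤ x * ((BSet A S).card : ℝ) := mul_le_mul_of_nonneg_left hchain hx0.le

theorem LLL_exists (A : κ → Finset (I → Bool)) (vbl : κ → Finset I)
    (x : ℝ) (hx0 : 0 < x) (hx1 : x < 1)
    (hdep : ∀ k, ∀ ω ω' : I → Bool, (∀ i ∈ vbl k, ω i = ω' i) → ω ∈ A k → ω' ∈ A k)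
    (hcond : ∀ k, ((A k).card : ℝ) ≤ x *
      (1 - x) ^ (((univ.filter fun j => ¬ Disjoint (vbl j) (vbl k)).card) - 1) *
      (Fintype.card (I → Bool))) :
    ∃ ω : I → Bool, ∀ k, ω ∉ A k := by
  have claim := LLL_claim1 A vbl x hx0 hx1 hdep hcond
  have h1x : (0:ℝ) < 1 - x := by linarith
  have hΩpos : (0:ℝ) < Fintype.card (I → Bool) := by
    have : 0 < Fintype.card (I → Bool) := Fintype.card_pos
    exact_mod_cast this
  have grow : ∀ U : Finset κ,
      (1 - x) ^ U.card * ((Fintype.card (I → Bool) : ℝ)) ≤ ((BSet A U).card : ℝ) := by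
    intro U
    induction U using Finset.induction_on with
    | empty => simp [BSet_empty, Finset.card_univ]
    | @insert a U' ha ihU =>
      have hstep := claim U'.card U' (le_refl _) a ha
      rw [card_BSet_insert, Finset.card_insert_of_notMem ha]
      calc (1 - x) ^ (U'.card + 1) * ((Fintype.card (I → Bool) : ℝ))
          = (1 - x) * ((1 - x) ^ U'.card * (Fintype.card (I → Bool) : ℝ)) := by ring
        _ ≤ (1 - x) * ((BSet A U').card : ℝ) := mul_le_mul_of_nonneg_left ihU h1x.le
        _ ≤ ((BSet A U').card : ℝ) - ((A a ∩ BSet A U').card : ℝ) := by linarith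
  have hpos : (0:ℝ) < ((BSet A univ).card : ℝ) := by
    refine lt_of_lt_of_le ?_ (grow univ)
    positivity
  have : 0 < (BSet A univ).card := by exact_mod_cast hpos
  obtain ⟨ω, hω⟩ := Finset.card_pos.1 this
  exact ⟨ω, fun k => (Finset.mem_filter.1 hω).2 k (mem_univ k)⟩

end LLLCore

open Finset

section Application

private lemma xor_cancel (a : Bool) {b c : Bool} (h : a.xor b = a.xor c) : b = c := by
  cases a <;> simpa using h

/-- The event that edge `f` is monochromatic. -/
def evA {V I : Type} [DecidableEq V] [Fintype I] [DecidableEq I]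
    (E : Finset (Finset V)) (q : V → I) (sgn : V → Bool) (f : Finset V) :
    Finset (I → Bool) :=
  if f ∈ E then univ.filter (fun ω => ∃ b : Bool, ∀ v ∈ f, (sgn v).xor (ω (q v)) = b)
  else ∅

/-- The coordinates that the event of edge `f` depends on. -/
def evVbl {V I : Type} [DecidableEq V] [DecidableEq I]
    (E : Finset (Finset V)) (q : V → I) (f : Finset V) : Finset I :=
  if f ∈ E then f.image q else ∅

theorem main_aux {V : Type} [Fintype V] [DecidableEq V]
    (n : ℕ) (hn : 1 ≤ n) (E : Finset (Finset V))
    (hunif : ∀ e ∈ E, e.card = n)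
    (hdeg : ∀ v : V, ((E.filter fun e => v ∈ e).card : ℝ)
      ≤ (2 : ℝ) ^ (n : ℕ) / (4 * Real.exp 1 * n))
    (p : V → V) (hinv : Function.Involutive p) (hnofix : ∀ v : V, p v ≠ v)
    {I : Type} [Fintype I] [DecidableEq I]
    (q : V → I) (sgn : V → Bool)
    (hq : ∀ v w, q v = q w → w = v ∨ w = p v)
    (hqp : ∀ v, q (p v) = q v)
    (hsgn : ∀ v, sgn (p v) = !sgn v) :
    ∃ c : V → Bool,
      (∀ e ∈ E, ∃ v ∈ e, ∃ w ∈ e, c v ≠ c w) ∧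
      (∀ v : V, c (p v) ≠ c v) := by
  classical
  have hexp : (0:ℝ) < Real.exp 1 := Real.exp_pos 1
  have hexp2 : (2:ℝ) ≤ Real.exp 1 := by
    have := Real.add_one_le_exp (1:ℝ); linarith
  by_cases hE : E = ∅
  · refine ⟨sgn, ?_, ?_⟩
    · simp [hE]
    · intro v; rw [hsgn]; cases sgn v <;> simp
  -- Nontrivial case
  have hnR : (1:ℝ) ≤ (n:ℝ) := by exact_mod_cast hn
  have hnR0 : (0:ℝ) < (n:ℝ) := by linarith
  set D : ℝ := (2:ℝ) ^ (n:ℕ) / (4 * Real.exp 1 * n) with hDdef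
  have hD1 : (1:ℝ) ≤ D := by
    obtain ⟨e₀, he₀⟩ := Finset.nonempty_iff_ne_empty.2 hE
    have hcard : e₀.card = n := hunif e₀ he₀
    have : 0 < e₀.card := by omega
    obtain ⟨v₀, hv₀⟩ := Finset.card_pos.1 this
    have hmem : e₀ ∈ E.filter (fun e => v₀ ∈ e) := Finset.mem_filter.2 ⟨he₀, hv₀⟩
    have h1 : 1 ≤ (E.filter (fun e => v₀ ∈ e)).card := Finset.card_pos.2 ⟨e₀, hmem⟩
    have h1R : (1:ℝ) ≤ ((E.filter (fun e => v₀ ∈ e)).card : ℝ) := by exact_mod_cast h1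
    exact h1R.trans (hdeg v₀)
  set M : ℝ := (2:ℝ) ^ (n:ℕ) / (2 * Real.exp 1) with hMdef
  have hMD : M = (n:ℝ) * (2 * D) := by
    rw [hDdef, hMdef]; field_simp; ring
  have hM2 : (2:ℝ) ≤ M := by
    rw [hMD]; nlinarith
  have hM0 : (0:ℝ) < M := by linarith
  set x : ℝ := 1 / M with hxdef
  have hx0 : (0:ℝ) < x := by positivity
  have hx1 : x < 1 := by
    rw [hxdef]
    rw [div_lt_one hM0]; linarith
  have hΩ : (Fintype.card (I → Bool) : ℝ) = (2:ℝ) ^ (Fintype.card I) := by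
    rw [Fintype.card_fun, Fintype.card_bool]; push_cast; ring
  -- apply the local lemma
  have hdepA : ∀ k, ∀ ω ω' : I → Bool, (∀ i ∈ evVbl E q k, ω i = ω' i) →
      ω ∈ evA E q sgn k → ω' ∈ evA E q sgn k := by
      intro f ω₁ ω₂ hagree h1
      rw [evA] at h1 ⊢
      by_cases hf : f ∈ E
      · rw [if_pos hf] at h1 ⊢
        simp only [Finset.mem_filter, Finset.mem_univ, true_and] at h1 ⊢
        obtain ⟨b, hb⟩ := h1
        refine ⟨b, fun v hv => ?_⟩
        have : ω₁ (q v) = ω₂ (q v) := by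
          apply hagree
          rw [evVbl, if_pos hf]
          exact Finset.mem_image_of_mem q hv
        rw [← this]; exact hb v hv
      · rw [if_neg hf] at h1; exact absurd h1 (Finset.notMem_empty _)
  have hcondA : ∀ f, ((evA E q sgn f).card : ℝ) ≤ x *
      (1 - x) ^ (((univ.filter fun j => ¬ Disjoint (evVbl E q j) (evVbl E q f)).card) - 1) *
      (Fintype.card (I → Bool)) := by
      intro f
      by_cases hf : f ∈ E
      · have hfcard : f.card = n := hunif f hf
        have hfne : f.Nonempty := Finset.card_pos.1 (by omega)
        set Nf := univ.filter fun j => ¬ Disjoint (evVbl E q j) (evVbl E q f) with hNf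
        set m := Nf.card with hm
        -- m ≥ 1 since f ∈ Nf
        have hfNf : f ∈ Nf := by
          rw [hNf, Finset.mem_filter]
          refine ⟨mem_univ _, fun hd => ?_⟩
          rw [evVbl, if_pos hf] at hd
          have : (f.image q).Nonempty := hfne.image q
          rw [Finset.disjoint_self_iff_empty] at hd
          exact Finset.nonempty_iff_ne_empty.1 this hd
        have hm1 : 1 ≤ m := Finset.card_pos.2 ⟨f, hfNf⟩
        -- m ≤ M
        have hmM : (m:ℝ) ≤ M := by
          have hsub : Nf ⊆ f.biUnion (fun v =>
              univ.filter fun j => j ∈ E ∧ (v ∈ j ∨ p v ∈ j)) := by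
            intro j hj
            rw [hNf, Finset.mem_filter] at hj
            obtain ⟨-, hnd⟩ := hj
            obtain ⟨i, hij, hif⟩ := Finset.not_disjoint_iff.1 hnd
            have hjE : j ∈ E := by
              by_contra hne
              rw [evVbl, if_neg hne] at hij
              exact Finset.notMem_empty _ hij
            rw [evVbl, if_pos hjE] at hij
            rw [evVbl, if_pos hf] at hif
            obtain ⟨v, hv, hvq⟩ := Finset.mem_image.1 hif
            obtain ⟨w, hw, hwq⟩ := Finset.mem_image.1 hij
            refine Finset.mem_biUnion.2 ⟨v, hv, Finset.mem_filter.2 ⟨mem_univ _, hjE, ?_⟩⟩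
            rcases hq v w (by rw [hvq, hwq]) with h | h
            · left; rw [← h]; exact hw
            · right; rw [← h]; exact hw
          have hb1 : m ≤ ∑ v ∈ f, (univ.filter fun j => j ∈ E ∧ (v ∈ j ∨ p v ∈ j)).card :=
            le_trans (Finset.card_le_card hsub) (Finset.card_biUnion_le)
          have hb2 : ∀ v ∈ f, ((univ.filter fun j => j ∈ E ∧ (v ∈ j ∨ p v ∈ j)).card : ℝ)
              ≤ 2 * D := by
            intro v _
            have hsplit : (univ.filter fun j : Finset V => j ∈ E ∧ (v ∈ j ∨ p v ∈ j))
                ⊆ (E.filter fun j => v ∈ j) ∪ (E.filter fun j => p v ∈ j) := by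
              intro j hj
              rw [Finset.mem_filter] at hj
              rw [Finset.mem_union, Finset.mem_filter, Finset.mem_filter]
              tauto
            have h3 := le_trans (Finset.card_le_card hsplit) (Finset.card_union_le _ _)
            have h3R : ((univ.filter fun j : Finset V => j ∈ E ∧ (v ∈ j ∨ p v ∈ j)).card : ℝ)
                ≤ ((E.filter fun j => v ∈ j).card : ℝ) + ((E.filter fun j => p v ∈ j).card : ℝ) := by
              exact_mod_cast h3
            have := hdeg v
            have := hdeg (p v)
            rw [hDdef]; linarith
          calc (m:ℝ) ≤ ((∑ v ∈ f, (univ.filter fun j => j ∈ E ∧ (v ∈ j ∨ p v ∈ j)).card : ℕ) : ℝ) := by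
                exact_mod_cast hb1
            _ = ∑ v ∈ f, ((univ.filter fun j => j ∈ E ∧ (v ∈ j ∨ p v ∈ j)).card : ℝ) := by
                push_cast; ring
            _ ≤ ∑ _v ∈ f, (2 * D) := Finset.sum_le_sum hb2
            _ = (n:ℝ) * (2 * D) := by rw [Finset.sum_const, hfcard, nsmul_eq_mul]
            _ = M := hMD.symm
        -- bound on the size of the event
        have hAcard : ((evA E q sgn f).card : ℝ) ≤ 2 * (2:ℝ) ^ (Fintype.card I) / 2 ^ n := by
          by_cases hpair : ∃ v ∈ f, p v ∈ f
          · -- the event is empty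
            obtain ⟨v, hv, hpv⟩ := hpair
            have hempty : evA E q sgn f = ∅ := by
              rw [evA, if_pos hf]
              refine Finset.eq_empty_of_forall_notMem fun ω₀ hω₀ => ?_
              simp only [Finset.mem_filter, Finset.mem_univ, true_and] at hω₀
              obtain ⟨b, hb⟩ := hω₀
              have h1 := hb v hv
              have h2 := hb (p v) hpv
              rw [hsgn, hqp] at h2
              cases sgn v <;> cases ω₀ (q v) <;> simp_all
            rw [hempty]; simp; positivity
          · -- q is injective on f
            push_neg at hpair
            have hinj : Set.InjOn q f := by
              intro v hv w hw hvw
              rcases hq v w hvw with h | h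
              · exact h.symm
              · exact absurd (h ▸ hw) (hpair v hv)
            have hTcard : (f.image q).card = n := by
              rw [Finset.card_image_of_injOn hinj, hfcard]
            have hnI : n ≤ Fintype.card I := by
              rw [← hTcard]; exact Finset.card_le_univ _
            -- the two monochromatic events
            have hSb : ∀ b : Bool, ((univ.filter fun ω₀ : I → Bool =>
                ∀ v ∈ f, (sgn v).xor (ω₀ (q v)) = b).card) ≤ 2 ^ (Fintype.card I - n) := by
              intro b
              have := agree_card (univ.filter fun ω₀ : I → Bool =>
                ∀ v ∈ f, (sgn v).xor (ω₀ (q v)) = b) (f.image q) ?_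
              · rwa [hTcard] at this
              · intro ω₁ hω₁ ω₂ hω₂ i hi
                obtain ⟨v, hv, rfl⟩ := Finset.mem_image.1 hi
                have h1 := (Finset.mem_filter.1 hω₁).2 v hv
                have h2 := (Finset.mem_filter.1 hω₂).2 v hv
                exact xor_cancel (sgn v) (h1.trans h2.symm)
            have hsub : evA E q sgn f ⊆
                (univ.filter fun ω₀ : I → Bool => ∀ v ∈ f, (sgn v).xor (ω₀ (q v)) = true)
                ∪ (univ.filter fun ω₀ : I → Bool => ∀ v ∈ f, (sgn v).xor (ω₀ (q v)) = false) := by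
              intro ω₀ hω₀
              rw [evA, if_pos hf] at hω₀
              simp only [Finset.mem_filter, Finset.mem_univ, true_and] at hω₀
              obtain ⟨b, hb⟩ := hω₀
              rw [Finset.mem_union]
              cases b
              · right; exact Finset.mem_filter.2 ⟨mem_univ _, hb⟩
              · left; exact Finset.mem_filter.2 ⟨mem_univ _, hb⟩
            have hnat : (evA E q sgn f).card ≤ 2 ^ (Fintype.card I - n) + 2 ^ (Fintype.card I - n) :=
              le_trans (Finset.card_le_card hsub)
                (le_trans (Finset.card_union_le _ _) (Nat.add_le_add (hSb true) (hSb false)))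
            have hcast : ((2:ℝ) ^ (Fintype.card I - n)) = (2:ℝ) ^ (Fintype.card I) / 2 ^ n := by
              rw [eq_div_iff (by positivity), ← pow_add, Nat.sub_add_cancel hnI]
            have hR : ((evA E q sgn f).card : ℝ)
                ≤ (2:ℝ) ^ (Fintype.card I - n) + (2:ℝ) ^ (Fintype.card I - n) := by
              exact_mod_cast hnat
            rw [hcast] at hR
            have hring : (2:ℝ) * 2 ^ (Fintype.card I) / 2 ^ n
                = (2:ℝ) ^ (Fintype.card I) / 2 ^ n + (2:ℝ) ^ (Fintype.card I) / 2 ^ n := by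
              ring
            rw [hring]
            linarith
        -- numerical step
        have hknum : 2 / (2:ℝ) ^ n ≤ x * (1 - x) ^ (m - 1) := by
          set k := m - 1 with hk
          have hkm : (k:ℝ) + 1 = m := by
            rw [hk]; push_cast [Nat.cast_sub hm1]; ring
          have hxk : x ≤ 1 / ((k:ℝ) + 1) := by
            rw [hkm, hxdef]
            apply one_div_le_one_div_of_le
            · exact_mod_cast hm1
            · exact hmM
          have hpow := one_sub_pow_ge_exp_neg_one k x hx0.le hxk
          have hxe : x * Real.exp (-1) = 2 / (2:ℝ)^n := by
            rw [hxdef, hMdef, Real.exp_neg, one_div_div]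
            rw [div_mul_eq_mul_div, mul_inv_cancel_right₀ (ne_of_gt hexp)]
          calc 2 / (2:ℝ)^n = x * Real.exp (-1) := hxe.symm
            _ ≤ x * (1 - x) ^ k := mul_le_mul_of_nonneg_left hpow hx0.le
        -- combine
        rw [hΩ]
        calc ((evA E q sgn f).card : ℝ) ≤ 2 * (2:ℝ) ^ (Fintype.card I) / 2 ^ n := hAcard
          _ = (2 / (2:ℝ)^n) * (2:ℝ) ^ (Fintype.card I) := by ring
          _ ≤ (x * (1 - x) ^ (m - 1)) * (2:ℝ) ^ (Fintype.card I) :=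
              mul_le_mul_of_nonneg_right hknum (by positivity)
          _ = x * (1 - x) ^ (m - 1) * (2:ℝ) ^ (Fintype.card I) := by ring
      · -- f ∉ E : the event is empty
        rw [evA, if_neg hf]
        simp only [Finset.card_empty, Nat.cast_zero]
        have h1x : (0:ℝ) < 1 - x := by linarith
        positivity
  obtain ⟨ω, hω⟩ := LLL_exists (evA E q sgn) (evVbl E q) x hx0 hx1 hdepA hcondA
  · -- extract the coloring
    refine ⟨fun v => (sgn v).xor (ω (q v)), ?_, ?_⟩
    · intro e he
      have h1 := hω e
      rw [evA, if_pos he] at h1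
      simp only [Finset.mem_filter, Finset.mem_univ, true_and] at h1
      have h2 := h1
      push_neg at h2
      obtain ⟨v, hv, hvne⟩ := h2 true
      obtain ⟨w, hw, hwne⟩ := h2 false
      have hv' : (sgn v).xor (ω (q v)) = false := by
        cases h : (sgn v).xor (ω (q v)) <;> simp_all
      have hw' : (sgn w).xor (ω (q w)) = true := by
        cases h : (sgn w).xor (ω (q w)) <;> simp_all
      refine ⟨v, hv, w, hw, ?_⟩
      show (sgn v).xor (ω (q v)) ≠ (sgn w).xor (ω (q w))
      rw [hv', hw']; simp
    · intro v
      show (sgn (p v)).xor (ω (q (p v))) ≠ (sgn v).xor (ω (q v))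
      rw [hsgn, hqp]
      cases sgn v <;> cases ω (q v) <;> simp

end Application

/-- The setoid identifying each vertex with its partner under the pairing `p`. -/
def pairSetoid {V : Type} (p : V → V) (hinv : Function.Involutive p) : Setoid V where
  r v w := w = v ∨ w = p v
  iseqv := by
    constructor
    · intro v; exact Or.inl rfl
    · intro v w h
      rcases h with h | h
      · exact Or.inl h.symm
      · right; rw [h, hinv]
    · intro u v w h1 h2
      rcases h1 with h1 | h1 <;> rcases h2 with h2 | h2
      · exact Or.inl (h2.trans h1)
      · right; rw [h2, h1]
      · right; rw [h2, h1]
      · left; rw [h2, h1, hinv]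

/-- Every `n`-uniform hypergraph with maximum degree at most `2^n/(4en)` admits,
for every perfect pairing of its vertices (a fixed-point-free involution `p`),
a proper 2-coloring in which the two vertices of each pair get different colors. -/
theorem proper_coloring_respecting_pairing {V : Type} [Fintype V] [DecidableEq V]
    (n : ℕ) (hn : 1 ≤ n) (E : Finset (Finset V))
    (hunif : ∀ e ∈ E, e.card = n)
    (hdeg : ∀ v : V, ((E.filter fun e => v ∈ e).card : ℝ)
      ≤ (2 : ℝ) ^ (n : ℕ) / (4 * Real.exp 1 * n))
    (p : V → V) (hinv : Function.Involutive p) (hnofix : ∀ v : V, p v ≠ v) :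
    ∃ c : V → Bool,
      (∀ e ∈ E, ∃ v ∈ e, ∃ w ∈ e, c v ≠ c w) ∧
      (∀ v : V, c (p v) ≠ c v) := by
  classical
  set s : Setoid V := pairSetoid p hinv with hs
  set q : V → V := fun v => (Quotient.mk s v).out with hqdef
  have hout : ∀ v : V, q v = v ∨ q v = p v := by
    intro v
    have h0 : Quotient.mk s (q v) = Quotient.mk s v := Quotient.out_eq _
    have h : v = q v ∨ v = p (q v) := Quotient.exact h0
    rcases h with h | h
    · exact Or.inl h.symm
    · right
      have h2 : p v = p (p (q v)) := congrArg p h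
      rw [hinv (q v)] at h2
      exact h2.symm
  have hmkq : ∀ v : V, Quotient.mk s (q v) = Quotient.mk s v := fun v => Quotient.out_eq _
  have hmkp : ∀ v : V, Quotient.mk s (p v) = Quotient.mk s v := by
    intro v
    apply Quotient.sound
    exact Or.inr (hinv v).symm
  have hqp : ∀ v : V, q (p v) = q v := by
    intro v
    show (Quotient.mk s (p v)).out = (Quotient.mk s v).out
    rw [hmkp]
  have hq : ∀ v w : V, q v = q w → w = v ∨ w = p v := by
    intro v w h
    have h2 : Quotient.mk s v = Quotient.mk s w := by
      rw [← hmkq v, ← hmkq w]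
      show Quotient.mk s (q v) = Quotient.mk s (q w)
      rw [h]
    exact Quotient.exact h2
  have hsgn : ∀ v : V, (fun v => decide (q v ≠ v)) (p v) = !(fun v => decide (q v ≠ v)) v := by
    intro v
    simp only
    rcases hout v with h | h
    · have h1 : q (p v) = v := by rw [hqp, h]
      have h2 : decide (q v ≠ v) = false := by simp [h]
      have h3 : decide (q (p v) ≠ p v) = true := by
        simp only [h1, decide_eq_true_eq]
        intro hc
        exact hnofix v hc.symm
      rw [h2, h3]
      rfl
    · have h1 : q (p v) = p v := by rw [hqp, h]
      have h2 : decide (q v ≠ v) = true := by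
        simp only [h, decide_eq_true_eq]
        intro hc
        exact hnofix v hc
      have h3 : decide (q (p v) ≠ p v) = false := by simp [h1]
      rw [h2, h3]
      rfl
  exact main_aux n hn E hunif hdeg p hinv hnofix q (fun v => decide (q v ≠ v)) hq hqp hsgn
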